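/- (Discrete energy upper estimate for incremental solutions) Let 0 = t₀ < t₁ < ⋯ < t_N = T, y₀ given, and for i = 1,…,N let y_i minimize y ↦ W(y) − ⟨σ(t_i), y⟩ + D(y − y_{i−1}). Then for every m ≤ N: W(y_m) − ⟨σ(t_m), y_m⟩ + Σ_{i=1}^m D(y_i − y_{i−1}) ≤ W(y₀) − ⟨σ(t₀), y₀⟩ − Σ_{i=1}^m ⟨σ(t_i) − σ(t_{i−1}), y_{i−1}⟩. -/

import Mathlib

/-- Discrete energy upper estimate for incremental solutions. -/
theorem stmt7 {H : Type*} [NormedAddCommGroup H] [InnerProductSpace ℝ H]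
    (N : ℕ) (t : ℕ → ℝ) (T : ℝ) (ht0 : t 0 = 0) (htN : t N = T)
    (htmono : ∀ i j, i ≤ j → j ≤ N → t i ≤ t j)
    (W : H → ℝ) (D : H → ℝ) (hDnn : ∀ a, 0 ≤ D a) (hD0 : D 0 = 0)
    (σ : ℝ → H) (y : ℕ → H)
    (hmin : ∀ i : ℕ, 1 ≤ i → i ≤ N → ∀ x : H,
      W (y i) - (inner ℝ (σ (t i)) (y i) : ℝ) + D (y i - y (i - 1))
        ≤ W x - (inner ℝ (σ (t i)) x : ℝ) + D (x - y (i - 1))) :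
    ∀ m : ℕ, m ≤ N →
      W (y m) - (inner ℝ (σ (t m)) (y m) : ℝ)
          + ∑ i ∈ Finset.range m, D (y (i + 1) - y i)
        ≤ W (y 0) - (inner ℝ (σ (t 0)) (y 0) : ℝ)
          - ∑ i ∈ Finset.range m, (inner ℝ (σ (t (i + 1)) - σ (t i)) (y i) : ℝ) := by
  intro m
  induction m with
  | zero => simp
  | succ n ih =>
    intro hle
    have hn : n ≤ N := Nat.le_of_succ_le hle
    have hstep := hmin (n + 1) (Nat.le_add_left 1 n) hle (y n)
    simp only [Nat.add_sub_cancel, sub_self, hD0] at hstep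
    have key : W (y (n + 1)) - (inner ℝ (σ (t (n + 1))) (y (n + 1)) : ℝ)
        + D (y (n + 1) - y n)
        ≤ W (y n) - (inner ℝ (σ (t n)) (y n) : ℝ)
          - (inner ℝ (σ (t (n + 1)) - σ (t n)) (y n) : ℝ) := by
      have : (inner ℝ (σ (t (n + 1)) - σ (t n)) (y n) : ℝ)
          = (inner ℝ (σ (t (n + 1))) (y n) : ℝ) - (inner ℝ (σ (t n)) (y n) : ℝ) :=
        inner_sub_left _ _ _
      linarith
    rw [Finset.sum_range_succ, Finset.sum_range_succ]
    have := ih hn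
    linarith
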